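/- Let α,β,γ > -1 be real and 0 ≤ k ≤ n integers. Then ∬_{T²} U_{k,n}^{α,β,γ}(u,v) · u^{k} v^{n-k} · W_{α,β,γ}(u,v) du dv = (-1)ⁿ · (α+1)_k (β+1)_{n-k} (γ+1)_n · k! (n-k)! / (α+β+γ+3)_{2n}. -/

import Mathlib

open Real MeasureTheory

/-- The Pochhammer symbol `(a)_k = a(a+1)⋯(a+k-1) = Γ(a+k)/Γ(a)`. -/
noncomputable def poch (a : ℝ) (k : ℕ) : ℝ := ∏ i ∈ Finset.range k, (a + (i : ℝ))

/-- Iterated partial derivative `∂^{k+l}/∂x^k ∂y^l` of a two-variable function. -/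
noncomputable def pderiv2 (k l : ℕ) (f : ℝ → ℝ → ℝ) (x y : ℝ) : ℝ :=
  iteratedDeriv k (fun s => iteratedDeriv l (fun t => f s t) y) x

/-- Extended Beta function `B(x,y,z) = Γ(x)Γ(y)Γ(z)/Γ(x+y+z)`. -/
noncomputable def Beta3 (x y z : ℝ) : ℝ :=
  Real.Gamma x * Real.Gamma y * Real.Gamma z / Real.Gamma (x + y + z)

/-- The Appell polynomial `U_{k,n}^{α,β,γ}` given by the Rodrigues-type formula. -/
noncomputable def Ukn (α β γ : ℝ) (k n : ℕ) (x y : ℝ) : ℝ :=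
  (x ^ α * y ^ β * (1 - x - y) ^ γ)⁻¹ *
    pderiv2 k (n - k) (fun u v =>
      u ^ ((k : ℝ) + α) * v ^ ((n : ℝ) - (k : ℝ) + β) * (1 - u - v) ^ ((n : ℝ) + γ)) x y

/-- The normalized Jacobi weight on the triangle,
`W_{α,β,γ}(x,y) = x^α y^β (1-x-y)^γ / B(α+1,β+1,γ+1)`. -/
noncomputable def Wt (α β γ : ℝ) (x y : ℝ) : ℝ :=
  x ^ α * y ^ β * (1 - x - y) ^ γ / Beta3 (α + 1) (β + 1) (γ + 1)

/-- The triangular region `T² = {(u,v) : 0 ≤ u, 0 ≤ v, u+v ≤ 1}`. -/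
def T2 : Set (ℝ × ℝ) := {p | 0 ≤ p.1 ∧ 0 ≤ p.2 ∧ p.1 + p.2 ≤ 1}

/-- The biorthogonal (monic-basis) polynomial `V_{m,n}^{α,β,γ}`. -/
noncomputable def Vmn (α β γ : ℝ) (m n : ℕ) (x y : ℝ) : ℝ :=
  ∑ i ∈ Finset.range (m + 1), ∑ j ∈ Finset.range (n + 1),
    (-1 : ℝ) ^ (m + n + i + j) * (m.choose i : ℝ) * (n.choose j : ℝ) *
      (poch (α + 1) m * poch (β + 1) n * poch (α + β + γ + 2) (m + n + i + j)) /
      (poch (α + 1) i * poch (β + 1) j * poch (α + β + γ + 2) (2 * m + 2 * n)) *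
      x ^ i * y ^ j

noncomputable def ffall (c : ℝ) (m : ℕ) : ℝ := ∏ i ∈ Finset.range m, (c - (i : ℝ))

lemma poch_zero (a : ℝ) : poch a 0 = 1 := by simp [poch]

lemma poch_succ (a : ℝ) (k : ℕ) : poch a (k+1) = poch a k * (a + k) := by
  simp [poch, Finset.prod_range_succ]

lemma poch_succ' (a : ℝ) (k : ℕ) : poch a (k+1) = a * poch (a+1) k := by
  rw [poch, Finset.prod_range_succ', mul_comm]
  simp only [Nat.cast_zero, add_zero]
  congr 1
  apply Finset.prod_congr rfl
  intro i _
  push_cast; ring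

lemma ffall_succ (c : ℝ) (m : ℕ) : ffall c (m+1) = ffall c m * (c - m) := by
  simp [ffall, Finset.prod_range_succ]

lemma ffall_add (c : ℝ) (m1 m2 : ℕ) :
    ffall c (m1 + m2) = ffall c m1 * ffall (c - m1) m2 := by
  simp only [ffall, Finset.prod_range_add]
  congr 1
  apply Finset.prod_congr rfl
  intro i _
  push_cast; ring

lemma Gamma_poch (a : ℝ) (ha : 0 < a) (m : ℕ) :
    Real.Gamma (a + m) = poch a m * Real.Gamma a := by
  induction m with
  | zero => simp [poch_zero]
  | succ m ih =>
    have h1 : a + (↑(m+1) : ℝ) = (a + m) + 1 := by push_cast; ring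
    rw [h1, Real.Gamma_add_one (by positivity), ih, poch_succ]; ring

lemma Gamma_ffall (c : ℝ) (m : ℕ) (h : 0 < c - m + 1) :
    ffall c m * Real.Gamma (c - m + 1) = Real.Gamma (c + 1) := by
  induction m with
  | zero => simp [ffall]
  | succ m ih =>
    have hc : (0:ℝ) < c - m := by
      have : ((m:ℝ)) + 1 = ((m+1 : ℕ) : ℝ) := by push_cast; ring
      nlinarith [h, this]
    have hm : (0:ℝ) < c - m + 1 := by linarith
    have e1 : c - (↑(m+1) : ℝ) + 1 = c - m := by push_cast; ring
    rw [ffall_succ, e1, mul_assoc, ← Real.Gamma_add_one (ne_of_gt hc)]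
    exact ih hm

lemma fdiff (k : ℕ) (a : ℝ) :
    ∑ i ∈ Finset.range (k+1), (-1:ℝ)^(k-i) * (k.choose i : ℝ) * poch (a - i + 1) k
      = (-1:ℝ)^k * (k.factorial : ℝ) := by
  induction k with
  | zero => simp [poch_zero]
  | succ k ih =>
    have habel : ∑ i ∈ Finset.range (k+2), (-1:ℝ)^(k+1-i) * ((k+1).choose i : ℝ) *
          poch (a - i + 1) (k+1)
        = ∑ i ∈ Finset.range (k+1), (-1:ℝ)^(k-i) * (k.choose i : ℝ) *
          poch (a - (i+1:ℕ) + 1) (k+1)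
          - ∑ i ∈ Finset.range (k+1), (-1:ℝ)^(k-i) * (k.choose i : ℝ) *
          poch (a - i + 1) (k+1) := by
      rw [Finset.sum_range_succ' (fun i => (-1:ℝ)^(k+1-i) * ((k+1).choose i : ℝ) *
          poch (a - i + 1) (k+1))]
      have hsplit : ∀ i ∈ Finset.range (k+1),
          (-1:ℝ)^(k+1-(i+1)) * ((k+1).choose (i+1) : ℝ) * poch (a - (i+1:ℕ) + 1) (k+1)
          = (-1:ℝ)^(k-i) * (k.choose i : ℝ) * poch (a - (i+1:ℕ) + 1) (k+1)
            + (-1:ℝ)^(k-i) * (k.choose (i+1) : ℝ) * poch (a - (i+1:ℕ) + 1) (k+1) := by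
        intro i _
        have he : k + 1 - (i+1) = k - i := by omega
        rw [he, Nat.choose_succ_succ]
        push_cast
        ring
      rw [Finset.sum_congr rfl hsplit, Finset.sum_add_distrib]
      have hshift : ∑ i ∈ Finset.range (k+1),
            (-1:ℝ)^(k-i) * (k.choose (i+1) : ℝ) * poch (a - (i+1:ℕ) + 1) (k+1)
          = - ∑ i ∈ Finset.range (k+1),
            (-1:ℝ)^(k-i) * (k.choose i : ℝ) * poch (a - i + 1) (k+1)
            - (-1:ℝ)^(k+1) * ((k.choose 0 : ℕ) : ℝ) * poch (a - ((0:ℕ):ℝ) + 1) (k+1) := by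
        have hfull : ∑ i ∈ Finset.range (k+2),
              (-1:ℝ)^(k+1-i) * (k.choose i : ℝ) * poch (a - i + 1) (k+1)
            = (-1:ℝ)^(k+1) * ((k.choose 0 : ℕ) : ℝ) * poch (a - ((0:ℕ):ℝ) + 1) (k+1)
              + ∑ i ∈ Finset.range (k+1),
              (-1:ℝ)^(k-i) * (k.choose (i+1) : ℝ) * poch (a - (i+1:ℕ) + 1) (k+1) := by
          rw [Finset.sum_range_succ' (fun i => (-1:ℝ)^(k+1-i) * (k.choose i : ℝ) *
              poch (a - i + 1) (k+1))]
          have : ∀ i ∈ Finset.range (k+1),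
              (-1:ℝ)^(k+1-(i+1)) * (k.choose (i+1) : ℝ) * poch (a - (i+1:ℕ) + 1) (k+1)
              = (-1:ℝ)^(k-i) * (k.choose (i+1) : ℝ) * poch (a - (i+1:ℕ) + 1) (k+1) := by
            intro i _
            have he : k + 1 - (i+1) = k - i := by omega
            rw [he]
          rw [Finset.sum_congr rfl this]
          simp only [Nat.sub_zero, Nat.cast_zero, sub_zero, Nat.choose_zero_right,
            Nat.cast_one, pow_succ]
          ring
        have hfull2 : ∑ i ∈ Finset.range (k+2),
              (-1:ℝ)^(k+1-i) * (k.choose i : ℝ) * poch (a - i + 1) (k+1)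
            = - ∑ i ∈ Finset.range (k+1),
              (-1:ℝ)^(k-i) * (k.choose i : ℝ) * poch (a - i + 1) (k+1) := by
          rw [Finset.sum_range_succ (fun i => (-1:ℝ)^(k+1-i) * (k.choose i : ℝ) *
              poch (a - i + 1) (k+1))]
          rw [Nat.choose_succ_self]
          have : ∀ i ∈ Finset.range (k+1),
              (-1:ℝ)^(k+1-i) * (k.choose i : ℝ) * poch (a - i + 1) (k+1)
              = -((-1:ℝ)^(k-i) * (k.choose i : ℝ) * poch (a - i + 1) (k+1)) := by
            intro i hi
            have hik : i ≤ k := Nat.lt_succ_iff.mp (Finset.mem_range.mp hi)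
            have he : k + 1 - i = (k - i) + 1 := by omega
            rw [he, pow_succ]
            ring
          rw [Finset.sum_congr rfl this, Finset.sum_neg_distrib]
          simp
        rw [hfull2] at hfull
        linarith [hfull]
      rw [hshift]
      simp only [Nat.choose_zero_right, Nat.cast_one, Nat.cast_zero, sub_zero]
      have he0 : k + 1 - 0 = k + 1 := by omega
      rw [he0]
      ring
    rw [habel, ← Finset.sum_sub_distrib]
    have hdiff : ∀ i ∈ Finset.range (k+1),
        (-1:ℝ)^(k-i) * (k.choose i : ℝ) * poch (a - (i+1:ℕ) + 1) (k+1)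
          - (-1:ℝ)^(k-i) * (k.choose i : ℝ) * poch (a - i + 1) (k+1)
        = -((k:ℝ)+1) * ((-1:ℝ)^(k-i) * (k.choose i : ℝ) * poch (a - i + 1) k) := by
      intro i _
      have h1 : poch (a - (i+1:ℕ) + 1) (k+1) = (a - i) * poch (a - i + 1) k := by
        rw [poch_succ']
        have : a - ((i+1:ℕ):ℝ) + 1 = a - i := by push_cast; ring
        rw [this]
      have h2 : poch (a - i + 1) (k+1) = poch (a - i + 1) k * (a - i + 1 + k) := poch_succ _ _
      rw [h1, h2]
      ring
    rw [Finset.sum_congr rfl hdiff, ← Finset.mul_sum, ih]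
    rw [Nat.factorial_succ]
    push_cast
    ring

lemma beta_eqOn (q r : ℝ) : ∀ t ∈ Set.Icc (0:ℝ) 1,
    ((t:ℂ) ^ ((((q+1:ℝ)):ℂ) - 1) * (1 - (t:ℂ)) ^ ((((r+1:ℝ)):ℂ) - 1))
      = ((t ^ q * (1-t) ^ r : ℝ) : ℂ) := by
  intro t ht
  obtain ⟨h0, h1⟩ := ht
  have e1 : (((q+1:ℝ)):ℂ) - 1 = ((q:ℝ):ℂ) := by push_cast; ring
  have e2 : (((r+1:ℝ)):ℂ) - 1 = ((r:ℝ):ℂ) := by push_cast; ring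
  rw [e1, e2, ← Complex.ofReal_cpow h0, ← Complex.ofReal_one, ← Complex.ofReal_sub,
    ← Complex.ofReal_cpow (by linarith), ← Complex.ofReal_mul]

lemma beta_intervalIntegrable (q r : ℝ) (hq : -1 < q) (hr : -1 < r) :
    IntervalIntegrable (fun t : ℝ => t ^ q * (1-t) ^ r) volume 0 1 := by
  have hG : IntervalIntegrable (fun t : ℝ =>
      (t:ℂ) ^ ((((q+1:ℝ)):ℂ) - 1) * (1 - (t:ℂ)) ^ ((((r+1:ℝ)):ℂ) - 1)) volume 0 1 := by
    apply Complex.betaIntegral_convergent <;> simp <;> linarith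
  rw [intervalIntegrable_iff] at hG ⊢
  have h2 : IntegrableOn (fun t : ℝ =>
      ((t:ℂ) ^ ((((q+1:ℝ)):ℂ) - 1) * (1 - (t:ℂ)) ^ ((((r+1:ℝ)):ℂ) - 1)).re)
      (Set.uIoc (0:ℝ) 1) volume := hG.re
  apply h2.congr_fun ?_ measurableSet_uIoc
  intro t ht
  rw [Set.uIoc_of_le (by norm_num : (0:ℝ) ≤ 1)] at ht
  have := beta_eqOn q r t ⟨le_of_lt ht.1, ht.2⟩
  simp only [this, Complex.ofReal_re]

lemma beta_integral_value (q r : ℝ) (hq : -1 < q) (hr : -1 < r) :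
    ∫ t in (0:ℝ)..1, t ^ q * (1-t) ^ r
      = Real.Gamma (q+1) * Real.Gamma (r+1) / Real.Gamma (q+r+2) := by
  have key : Complex.Gamma (((q+1:ℝ)):ℂ) * Complex.Gamma (((r+1:ℝ)):ℂ)
      = Complex.Gamma ((((q+1:ℝ)):ℂ) + (((r+1:ℝ)):ℂ)) *
        Complex.betaIntegral (((q+1:ℝ)):ℂ) (((r+1:ℝ)):ℂ) := by
    apply Complex.Gamma_mul_Gamma_eq_betaIntegral <;> simp <;> linarith
  have hbeta : Complex.betaIntegral (((q+1:ℝ)):ℂ) (((r+1:ℝ)):ℂ)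
      = ((∫ t in (0:ℝ)..1, t ^ q * (1-t) ^ r : ℝ) : ℂ) := by
    rw [Complex.betaIntegral]
    rw [intervalIntegral.integral_congr (g := fun t : ℝ => ((t ^ q * (1-t) ^ r : ℝ) : ℂ)) ?_]
    · exact intervalIntegral.integral_ofReal
    · intro t ht
      rw [Set.uIcc_of_le (by norm_num : (0:ℝ) ≤ 1)] at ht
      exact beta_eqOn q r t ht
  rw [hbeta] at key
  have hsum : (((q+1:ℝ)):ℂ) + (((r+1:ℝ)):ℂ) = (((q+r+2:ℝ)):ℂ) := by push_cast; ring
  rw [hsum, Complex.Gamma_ofReal, Complex.Gamma_ofReal, Complex.Gamma_ofReal] at key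
  have key2 : Real.Gamma (q+1) * Real.Gamma (r+1)
      = Real.Gamma (q+r+2) * ∫ t in (0:ℝ)..1, t ^ q * (1-t) ^ r := by
    exact_mod_cast key
  have hpos : 0 < Real.Gamma (q+r+2) := Real.Gamma_pos_of_pos (by linarith)
  field_simp
  linarith [key2]

lemma beta_scaled_intervalIntegrable (q r A : ℝ) (hq : -1 < q) (hr : -1 < r) (hA : 0 < A) :
    IntervalIntegrable (fun y : ℝ => y ^ q * (A - y) ^ r) volume 0 A := by
  have h0 := beta_intervalIntegrable q r hq hr
  have h1 := (h0.comp_mul_left (c := A⁻¹)).const_mul (A ^ (q+r))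
  rw [zero_div, one_div, inv_inv] at h1
  rw [intervalIntegrable_iff] at h1 ⊢
  apply h1.congr_fun ?_ measurableSet_uIoc
  intro y hy
  rw [Set.uIoc_of_le hA.le] at hy
  obtain ⟨hy0, hyA⟩ := hy
  have hy0' : (0:ℝ) ≤ y := hy0.le
  have hAy : (0:ℝ) ≤ A - y := by linarith
  have e1 : A⁻¹ * y = y / A := by ring
  have e2 : (1 : ℝ) - y / A = (A - y) / A := by field_simp
  simp only [e1, e2]
  rw [Real.div_rpow hy0' hA.le, Real.div_rpow hAy hA.le, Real.rpow_add hA]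
  field_simp

lemma beta_scaled_value (q r A : ℝ) (hq : -1 < q) (hr : -1 < r) (hA : 0 < A) :
    ∫ y in (0:ℝ)..A, y ^ q * (A - y) ^ r
      = A ^ (q+r+1) * (Real.Gamma (q+1) * Real.Gamma (r+1) / Real.Gamma (q+r+2)) := by
  have hsub := intervalIntegral.integral_comp_mul_left
    (fun y : ℝ => y ^ q * (A - y) ^ r) (ne_of_gt hA) (a := 0) (b := 1)
  rw [mul_zero, mul_one] at hsub
  have hcong : ∫ x in (0:ℝ)..1, (A * x) ^ q * (A - A * x) ^ r
      = ∫ x in (0:ℝ)..1, A ^ (q+r) * (x ^ q * (1-x) ^ r) := by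
    apply intervalIntegral.integral_congr
    intro t ht
    rw [Set.uIcc_of_le (by norm_num : (0:ℝ) ≤ 1)] at ht
    obtain ⟨ht0, ht1⟩ := ht
    show (A * t) ^ q * (A - A * t) ^ r = A ^ (q+r) * (t ^ q * (1-t) ^ r)
    have e1 : A - A * t = A * (1 - t) := by ring
    rw [e1, Real.mul_rpow hA.le ht0, Real.mul_rpow hA.le (by linarith), Real.rpow_add hA]
    ring
  have hsub' : ∫ x in (0:ℝ)..1, (A * x) ^ q * (A - A * x) ^ r
      = A⁻¹ • ∫ y in (0:ℝ)..A, y ^ q * (A - y) ^ r := hsub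
  rw [hcong, intervalIntegral.integral_const_mul, beta_integral_value q r hq hr] at hsub'
  have : (∫ y in (0:ℝ)..A, y ^ q * (A - y) ^ r)
      = A * (A ^ (q+r) * (Real.Gamma (q+1) * Real.Gamma (r+1) / Real.Gamma (q+r+2))) := by
    rw [smul_eq_mul] at hsub'
    field_simp at hsub' ⊢
    linear_combination (-1 : ℝ) * hsub'
  rw [this, Real.rpow_add hA (q+r) 1, Real.rpow_one]
  ring

lemma measurableSet_T2 : MeasurableSet T2 := by
  have h1 : T2 = {p : ℝ × ℝ | 0 ≤ p.1} ∩ ({p : ℝ × ℝ | 0 ≤ p.2} ∩ {p : ℝ × ℝ | p.1 + p.2 ≤ 1}) := by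
    ext p; simp only [T2, Set.mem_setOf_eq, Set.mem_inter_iff]
  rw [h1]
  exact (measurableSet_le measurable_const measurable_fst).inter
    ((measurableSet_le measurable_const measurable_snd).inter
      (measurableSet_le (measurable_fst.add measurable_snd) measurable_const))

lemma measurable_rpow_const (c : ℝ) : Measurable (fun x : ℝ => x ^ c) := by
  classical
  have hg : Measurable (fun x : ℝ => if x = 0 then (if c = 0 then (1:ℝ) else 0)
      else Real.exp (Real.log x * c) * (if x < 0 then Real.cos (c * Real.pi) else 1)) := by
    apply Measurable.ite
    · exact measurableSet_singleton (0:ℝ)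
    · exact measurable_const
    · exact ((Real.measurable_log.mul measurable_const).exp).mul
        (Measurable.ite (measurableSet_lt measurable_id measurable_const)
          measurable_const measurable_const)
  have heq : (fun x : ℝ => x ^ c) = (fun x : ℝ => if x = 0 then (if c = 0 then (1:ℝ) else 0)
      else Real.exp (Real.log x * c) * (if x < 0 then Real.cos (c * Real.pi) else 1)) := by
    funext x
    rcases lt_trichotomy x 0 with h | h | h
    · rw [if_neg (ne_of_lt h), if_pos h, Real.rpow_def_of_neg h]
    · subst h
      rw [if_pos rfl]
      by_cases hc : c = 0
      · simp [hc]
      · simp [Real.zero_rpow hc, hc]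
    · rw [if_neg (ne_of_gt h), if_neg (not_lt.mpr h.le), Real.rpow_def_of_pos h]
      ring
  rw [heq]
  exact hg

lemma measurable_G (p q r : ℝ) :
    Measurable (fun z : ℝ × ℝ => z.1 ^ p * z.2 ^ q * (1 - z.1 - z.2) ^ r) :=
  (((measurable_rpow_const p).comp measurable_fst).mul
    ((measurable_rpow_const q).comp measurable_snd)).mul
    ((measurable_rpow_const r).comp
      ((measurable_const.sub measurable_fst).sub measurable_snd))

lemma dirichlet (p q r : ℝ) (hp : -1 < p) (hq : -1 < q) (hr : -1 < r) :
    IntegrableOn (fun z : ℝ × ℝ => z.1 ^ p * z.2 ^ q * (1 - z.1 - z.2) ^ r) T2 volume ∧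
    ∫ z in T2, z.1 ^ p * z.2 ^ q * (1 - z.1 - z.2) ^ r
      = Beta3 (p+1) (q+1) (r+1) := by
  set G : ℝ × ℝ → ℝ := fun z => z.1 ^ p * z.2 ^ q * (1 - z.1 - z.2) ^ r with hGdef
  set F : ℝ × ℝ → ℝ := T2.indicator G with hFdef
  set Bqr : ℝ := Real.Gamma (q+1) * Real.Gamma (r+1) / Real.Gamma (q+r+2) with hBqr
  have hGmeas : Measurable G := measurable_G p q r
  have hFmeas : Measurable F := hGmeas.indicator measurableSet_T2
  -- slice description
  have hslice : ∀ x ∈ Set.Ioo (0:ℝ) 1, (fun y => F (x, y))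
      = Set.indicator (Set.Icc (0:ℝ) (1-x)) (fun y => G (x, y)) := by
    intro x hx
    funext y
    simp only [hFdef, Set.indicator, T2, Set.mem_setOf_eq, Set.mem_Icc]
    have : (0 ≤ x ∧ 0 ≤ y ∧ x + y ≤ 1) ↔ (0 ≤ y ∧ y ≤ 1 - x) := by
      constructor
      · rintro ⟨_, h2, h3⟩; exact ⟨h2, by linarith⟩
      · rintro ⟨h2, h3⟩; exact ⟨hx.1.le, h2, by linarith⟩
    simp only [this]
  have hslice0 : ∀ x ∉ Set.Icc (0:ℝ) 1, (fun y => F (x, y)) = (fun _ => (0:ℝ)) := by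
    intro x hx
    funext y
    simp only [Set.mem_Icc, not_and_or, not_le] at hx
    apply Set.indicator_of_notMem
    simp only [T2, Set.mem_setOf_eq]
    rcases hx with h | h
    · rintro ⟨h1, _, _⟩; linarith
    · rintro ⟨_, h2, h3⟩; linarith
  -- slice integrability and integral for x in (0,1)
  have hsliceInt : ∀ x ∈ Set.Ioo (0:ℝ) 1, Integrable (fun y => F (x, y)) volume ∧
      ∫ y, F (x, y) = x ^ p * ((1-x) ^ (q+r+1) * Bqr) := by
    intro x hx
    have hA : (0:ℝ) < 1 - x := by linarith [hx.2]
    have hg : (fun y => G (x, y)) = fun y => x ^ p * (y ^ q * ((1-x) - y) ^ r) := by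
      funext y
      simp only [hGdef]
      have : (1 : ℝ) - x - y = (1 - x) - y := by ring
      rw [this]; ring
    have hii : IntervalIntegrable (fun y => G (x, y)) volume 0 (1-x) := by
      rw [hg]
      exact (beta_scaled_intervalIntegrable q r (1-x) hq hr hA).const_mul _
    have hIcc : IntegrableOn (fun y => G (x, y)) (Set.Icc 0 (1-x)) volume := by
      rwa [intervalIntegrable_iff_integrableOn_Icc_of_le hA.le] at hii
    constructor
    · rw [hslice x hx]
      exact (integrable_indicator_iff measurableSet_Icc).2 hIcc
    · rw [hslice x hx, MeasureTheory.integral_indicator measurableSet_Icc]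
      rw [MeasureTheory.integral_Icc_eq_integral_Ioc,
        ← intervalIntegral.integral_of_le hA.le]
      rw [hg, intervalIntegral.integral_const_mul, beta_scaled_value q r (1-x) hq hr hA]
  -- nonnegativity of F
  have hFnn : ∀ z, 0 ≤ F z := by
    intro z
    apply Set.indicator_nonneg
    intro z hz
    obtain ⟨h1, h2, h3⟩ := hz
    have h4 : (0:ℝ) ≤ 1 - z.1 - z.2 := by linarith
    exact mul_nonneg (mul_nonneg (Real.rpow_nonneg h1 _) (Real.rpow_nonneg h2 _))
      (Real.rpow_nonneg h4 _)
  -- a.e. good x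
  have hae : ∀ᵐ x : ℝ, x ∈ Set.Ioo (0:ℝ) 1 ∪ (Set.Icc (0:ℝ) 1)ᶜ := by
    have hsub : (Set.Ioo (0:ℝ) 1 ∪ (Set.Icc (0:ℝ) 1)ᶜ)ᶜ ⊆ ({0, 1} : Set ℝ) := by
      intro x hx
      simp only [Set.mem_compl_iff, Set.mem_union, not_or, not_not, Set.mem_Ioo,
        Set.mem_Icc, not_and_or, not_lt] at hx
      obtain ⟨h1, h2⟩ := hx
      simp only [Set.mem_insert_iff, Set.mem_singleton_iff]
      rcases h1 with h | h
      · left; linarith [h2.1]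
      · right; linarith [h2.2]
    rw [MeasureTheory.ae_iff]
    refine measure_mono_null (fun x hx => hx) (measure_mono_null hsub ?_)
    exact Set.Countable.measure_zero
      (((Set.finite_singleton (1:ℝ)).insert 0).countable) _
  -- the inner-integral function
  have hinner : ∀ᵐ x : ℝ, (∫ y, F (x, y))
      = Set.indicator (Set.Ioo (0:ℝ) 1) (fun x => x ^ p * ((1-x) ^ (q+r+1) * Bqr)) x := by
    filter_upwards [hae] with x hx
    rcases hx with hx | hx
    · rw [(hsliceInt x hx).2, Set.indicator_of_mem hx]
    · rw [hslice0 x (by simpa using hx), Set.indicator_of_notMem (by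
        intro h; exact hx (Set.mem_of_mem_of_subset h Set.Ioo_subset_Icc_self))]
      simp
  have hmargInt : Integrable (fun x => ∫ y, F (x, y)) volume := by
    have hind : Integrable (Set.indicator (Set.Ioo (0:ℝ) 1)
        (fun x => x ^ p * ((1-x) ^ (q+r+1) * Bqr))) volume := by
      rw [integrable_indicator_iff measurableSet_Ioo]
      have h1 : IntervalIntegrable (fun x : ℝ => (x ^ p * (1-x) ^ (q+r+1)) * Bqr) volume 0 1 :=
        (beta_intervalIntegrable p (q+r+1) hp (by linarith)).mul_const _
      have h2 : IntegrableOn (fun x : ℝ => (x ^ p * (1-x) ^ (q+r+1)) * Bqr)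
          (Set.Icc (0:ℝ) 1) volume := by
        rwa [intervalIntegrable_iff_integrableOn_Icc_of_le (by norm_num)] at h1
      apply (h2.mono_set Set.Ioo_subset_Icc_self).congr_fun ?_ measurableSet_Ioo
      intro x _; ring
    exact hind.congr (hinner.mono fun x h => h.symm)
  -- integrability of F
  have hFint : Integrable F (volume : Measure (ℝ × ℝ)) := by
    rw [MeasureTheory.Measure.volume_eq_prod ℝ ℝ]
    rw [MeasureTheory.integrable_prod_iff
      (hFmeas.aestronglyMeasurable)]
    constructor
    · filter_upwards [hae] with x hx
      rcases hx with hx | hx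
      · exact (hsliceInt x hx).1
      · rw [hslice0 x (by simpa using hx)]; exact integrable_zero _ _ _
    · have : (fun x => ∫ y, ‖F (x, y)‖) = fun x => ∫ y, F (x, y) := by
        funext x
        congr 1
        funext y
        exact Real.norm_of_nonneg (hFnn _)
      rw [this]
      exact hmargInt
  -- conclude
  have hIOn : IntegrableOn G T2 volume := by
    rwa [← integrable_indicator_iff measurableSet_T2]
  refine ⟨hIOn, ?_⟩
  rw [← MeasureTheory.integral_indicator measurableSet_T2]
  have hprod : ∫ z, T2.indicator G z = ∫ x, ∫ y, F (x, y) := by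
    rw [show (volume : Measure (ℝ × ℝ)) = (volume : Measure ℝ).prod volume from
      MeasureTheory.Measure.volume_eq_prod ℝ ℝ]
    exact MeasureTheory.integral_prod F (by rwa [MeasureTheory.Measure.volume_eq_prod ℝ ℝ] at hFint)
  rw [hprod, MeasureTheory.integral_congr_ae hinner,
    MeasureTheory.integral_indicator measurableSet_Ioo]
  rw [← MeasureTheory.integral_Ioc_eq_integral_Ioo, ← intervalIntegral.integral_of_le
    (by norm_num : (0:ℝ) ≤ 1)]
  have : ∫ x in (0:ℝ)..1, x ^ p * ((1-x) ^ (q+r+1) * Bqr)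
      = (∫ x in (0:ℝ)..1, x ^ p * (1-x) ^ (q+r+1)) * Bqr := by
    rw [← intervalIntegral.integral_mul_const]
    apply intervalIntegral.integral_congr
    intro t _; ring
  rw [this, beta_integral_value p (q+r+1) hp (by linarith)]
  have hG2 : (0:ℝ) < Real.Gamma (q+r+2) := Real.Gamma_pos_of_pos (by linarith)
  have hG3 : (0:ℝ) < Real.Gamma ((p+1) + (q+1) + (r+1)) := Real.Gamma_pos_of_pos (by linarith)
  rw [hBqr, Beta3]
  have e1 : p + (q+r+1) + 2 = (p+1) + (q+1) + (r+1) := by ring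
  rw [e1]
  field_simp
  ring


lemma iteratedDeriv_congr_open {U : Set ℝ} (hU : IsOpen U) {f g : ℝ → ℝ}
    (h : ∀ x ∈ U, f x = g x) (n : ℕ) : ∀ x ∈ U, iteratedDeriv n f x = iteratedDeriv n g x := by
  induction n with
  | zero => simpa [iteratedDeriv_zero] using h
  | succ n ih =>
    intro x hx
    rw [iteratedDeriv_succ, iteratedDeriv_succ]
    apply Filter.EventuallyEq.deriv_eq
    exact Filter.eventuallyEq_of_mem (hU.mem_nhds hx) ih

lemma iteratedDeriv_const_mul' (n : ℕ) (C : ℝ) (f : ℝ → ℝ) :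
    iteratedDeriv n (fun t => C * f t) = fun t => C * iteratedDeriv n f t := by
  induction n with
  | zero => simp [iteratedDeriv_zero]
  | succ n ih =>
    rw [iteratedDeriv_succ, ih]
    funext t
    rw [iteratedDeriv_succ]
    exact deriv_const_mul_field C

lemma step_id (p q x A : ℝ) (k : ℕ) :
    ∑ i ∈ Finset.range (k+1), ((k.choose i : ℝ) * ffall p i * (-1:ℝ)^(k-i) * ffall q (k-i)) *
        ((p - i) * x^(p - i - 1) * (A-x)^(q - (k-i : ℕ))
          + x^(p - i) * ((q - (k-i : ℕ)) * (A-x)^(q - (k-i : ℕ) - 1) * (-1)))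
    = ∑ i ∈ Finset.range (k+2), (((k+1).choose i : ℝ) * ffall p i * (-1:ℝ)^(k+1-i) *
        ffall q (k+1-i)) * (x^(p - i) * (A-x)^(q - (k+1-i : ℕ))) := by
  set M : ℕ → ℝ := fun i => x^(p - i) * (A-x)^(q - (k+1) + i) with hM
  set af : ℕ → ℝ := fun i => (k.choose i : ℝ) * ffall p (i+1) * (-1:ℝ)^(k-i) * ffall q (k-i)
    with haf
  set bf : ℕ → ℝ := fun i => (k.choose i : ℝ) * ffall p i * (-1:ℝ)^(k+1-i) * ffall q (k+1-i)
    with hbf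
  set R : ℕ → ℝ := fun i => ((k+1).choose i : ℝ) * ffall p i * (-1:ℝ)^(k+1-i) * ffall q (k+1-i)
    with hR
  have hLHS : ∀ i ∈ Finset.range (k+1),
      ((k.choose i : ℝ) * ffall p i * (-1:ℝ)^(k-i) * ffall q (k-i)) *
        ((p - i) * x^(p - i - 1) * (A-x)^(q - (k-i : ℕ))
          + x^(p - i) * ((q - (k-i : ℕ)) * (A-x)^(q - (k-i : ℕ) - 1) * (-1)))
      = af i * M (i+1) + bf i * M i := by
    intro i hi
    have hik : i ≤ k := Nat.lt_succ_iff.mp (Finset.mem_range.mp hi)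
    have hc1 : ((k - i : ℕ) : ℝ) = (k : ℝ) - i := by
      rw [Nat.cast_sub hik]
    have hn1 : k + 1 - i = (k - i) + 1 := by omega
    have e1 : p - (i:ℝ) - 1 = p - ((i+1 : ℕ) : ℝ) := by push_cast; ring
    have e2 : q - ((k - i : ℕ) : ℝ) = q - ((k:ℝ)+1) + ((i+1:ℕ):ℝ) := by
      rw [hc1]; push_cast; ring
    have e3 : q - ((k - i : ℕ) : ℝ) - 1 = q - ((k:ℝ)+1) + (i:ℝ) := by
      rw [hc1]; ring
    rw [hM, haf, hbf]
    simp only []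
    rw [hn1, ffall_succ p i, ffall_succ q (k-i), pow_succ, e1, e3, e2]
    ring
  rw [Finset.sum_congr rfl hLHS, Finset.sum_add_distrib]
  have hRHS : ∀ i ∈ Finset.range (k+2),
      (((k+1).choose i : ℝ) * ffall p i * (-1:ℝ)^(k+1-i) * ffall q (k+1-i)) *
        (x^(p - i) * (A-x)^(q - (k+1-i : ℕ)))
      = R i * M i := by
    intro i hi
    have hik : i ≤ k + 1 := Nat.lt_succ_iff.mp (Finset.mem_range.mp hi)
    have hc1 : ((k + 1 - i : ℕ) : ℝ) = (k : ℝ) + 1 - i := by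
      rw [Nat.cast_sub hik]; push_cast; ring
    have e2 : q - ((k + 1 - i : ℕ) : ℝ) = q - ((k:ℝ)+1) + i := by rw [hc1]; ring
    rw [hR, hM]
    simp only []
    rw [e2]
  rw [Finset.sum_congr rfl hRHS]
  have hbext : ∑ i ∈ Finset.range (k+1), bf i * M i
      = ∑ i ∈ Finset.range (k+2), bf i * M i := by
    rw [Finset.sum_range_succ (fun i => bf i * M i) (k+1)]
    have : bf (k+1) = 0 := by
      rw [hbf]; simp [Nat.choose_succ_self]
    rw [this]; ring
  rw [hbext]
  rw [Finset.sum_range_succ' (fun i => bf i * M i) (k+1),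
    Finset.sum_range_succ' (fun i => R i * M i) (k+1)]
  have hb0 : bf 0 = R 0 := by rw [hbf, hR]; simp
  have hcomb : ∀ i ∈ Finset.range (k+1), af i * M (i+1) + bf (i+1) * M (i+1)
      = R (i+1) * M (i+1) := by
    intro i hi
    have : R (i+1) = af i + bf (i+1) := by
      rw [hR, haf, hbf]
      simp only []
      rw [Nat.choose_succ_succ k i]
      have hn2 : k + 1 - (i + 1) = k - i := by omega
      rw [hn2]
      push_cast
      ring
    rw [this]; ring
  rw [hb0]
  have hsum : ∑ i ∈ Finset.range (k+1), af i * M (i+1)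
      + ∑ i ∈ Finset.range (k+1), bf (i+1) * M (i+1)
      = ∑ i ∈ Finset.range (k+1), R (i+1) * M (i+1) := by
    rw [← Finset.sum_add_distrib]
    exact Finset.sum_congr rfl hcomb
  linarith [hsum]

lemma key (A : ℝ) {ι : Type*} (S : Finset ι) (Cf bf cf : ι → ℝ) (k : ℕ) :
    ∀ x ∈ Set.Ioo (0:ℝ) A,
      iteratedDeriv k (fun t => ∑ j ∈ S, Cf j * (t ^ bf j * (A - t) ^ cf j)) x
      = ∑ j ∈ S, Cf j * ∑ i ∈ Finset.range (k+1),
          ((k.choose i : ℝ) * ffall (bf j) i * (-1:ℝ)^(k-i) * ffall (cf j) (k-i))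
            * (x ^ (bf j - i) * (A - x) ^ (cf j - (k-i : ℕ))) := by
  induction k with
  | zero =>
    intro x hx
    rw [iteratedDeriv_zero]
    apply Finset.sum_congr rfl
    intro j _
    simp [ffall]
  | succ k ih =>
    intro x hx
    rw [iteratedDeriv_succ]
    have hev : iteratedDeriv k (fun t => ∑ j ∈ S, Cf j * (t ^ bf j * (A - t) ^ cf j))
        =ᶠ[nhds x] (fun y => ∑ j ∈ S, Cf j * ∑ i ∈ Finset.range (k+1),
          ((k.choose i : ℝ) * ffall (bf j) i * (-1:ℝ)^(k-i) * ffall (cf j) (k-i))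
            * (y ^ (bf j - i) * (A - y) ^ (cf j - (k-i : ℕ)))) :=
      Filter.eventuallyEq_of_mem (isOpen_Ioo.mem_nhds hx) (fun y hy => ih y hy)
    rw [hev.deriv_eq]
    have hx0 : x ≠ 0 := ne_of_gt hx.1
    have hAx : A - x ≠ 0 := ne_of_gt (sub_pos.mpr hx.2)
    have hD : HasDerivAt (fun y => ∑ j ∈ S, Cf j * ∑ i ∈ Finset.range (k+1),
          ((k.choose i : ℝ) * ffall (bf j) i * (-1:ℝ)^(k-i) * ffall (cf j) (k-i))
            * (y ^ (bf j - i) * (A - y) ^ (cf j - (k-i : ℕ))))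
        (∑ j ∈ S, Cf j * ∑ i ∈ Finset.range (k+1),
          ((k.choose i : ℝ) * ffall (bf j) i * (-1:ℝ)^(k-i) * ffall (cf j) (k-i))
            * ((bf j - i) * x ^ (bf j - i - 1) * (A - x) ^ (cf j - (k-i : ℕ))
              + x ^ (bf j - i) * ((cf j - (k-i : ℕ)) * (A - x) ^ (cf j - (k-i : ℕ) - 1) * (-1)))) x := by
      apply HasDerivAt.fun_sum
      intro j _
      apply HasDerivAt.const_mul
      apply HasDerivAt.fun_sum
      intro i _
      apply HasDerivAt.const_mul
      have h1 : HasDerivAt (fun y : ℝ => y ^ (bf j - i)) ((bf j - i) * x ^ (bf j - i - 1)) x :=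
        Real.hasDerivAt_rpow_const (Or.inl hx0)
      have h2 : HasDerivAt (fun y : ℝ => (A - y) ^ (cf j - (k-i:ℕ)))
          ((cf j - (k-i:ℕ)) * (A - x) ^ (cf j - (k-i:ℕ) - 1) * (-1)) x := by
        have hout : HasDerivAt (fun u : ℝ => u ^ (cf j - (k-i:ℕ)))
            ((cf j - (k-i:ℕ)) * (A - x) ^ (cf j - (k-i:ℕ) - 1)) (A - x) :=
          Real.hasDerivAt_rpow_const (Or.inl hAx)
        have hin : HasDerivAt (fun y : ℝ => A - y) (-1) x := by
          simpa using (hasDerivAt_id' x).const_sub A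
        exact hout.comp x hin
      have := h1.mul h2
      convert this using 1
      rfl
    rw [hD.deriv]
    apply Finset.sum_congr rfl
    intro j _
    congr 1
    exact step_id (bf j) (cf j) x A k

lemma pderiv2_eval (a b c : ℝ) (k l : ℕ) (x y : ℝ)
    (hx : 0 < x) (hy : 0 < y) (hxy : x + y < 1) :
    iteratedDeriv k (fun s => iteratedDeriv l (fun t => s ^ a * (t ^ b * (1 - s - t) ^ c)) y) x
    = ∑ j ∈ Finset.range (l+1),
        (((l.choose j : ℝ) * ffall b j * (-1:ℝ)^(l-j) * ffall c (l-j)) * y ^ (b - j)) *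
        ∑ i ∈ Finset.range (k+1),
          ((k.choose i : ℝ) * ffall a i * (-1:ℝ)^(k-i) * ffall (c - (l-j:ℕ)) (k-i)) *
          (x ^ (a - i) * (1 - x - y) ^ ((c - (l-j:ℕ)) - (k-i:ℕ))) := by
  have hy1 : y < 1 := by linarith
  have hU : x ∈ Set.Ioo (0:ℝ) (1 - y) := ⟨hx, by linarith⟩
  -- inner description on Ioo 0 (1-y)
  have hinner : ∀ s ∈ Set.Ioo (0:ℝ) (1 - y),
      iteratedDeriv l (fun t => s ^ a * (t ^ b * (1 - s - t) ^ c)) y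
      = ∑ j ∈ Finset.range (l+1),
          (((l.choose j : ℝ) * ffall b j * (-1:ℝ)^(l-j) * ffall c (l-j)) * y ^ (b - j)) *
          (s ^ a * (1 - y - s) ^ (c - (l-j:ℕ))) := by
    intro s hs
    have hy' : y ∈ Set.Ioo (0:ℝ) (1 - s) := ⟨hy, by linarith [hs.1, hs.2]⟩
    have hfun : (fun t : ℝ => t ^ b * (1 - s - t) ^ c)
        = (fun t : ℝ => ∑ j ∈ Finset.range 1, (1:ℝ) * (t ^ b * (1 - s - t) ^ c)) := by
      funext t
      simp
    rw [iteratedDeriv_const_mul' l (s ^ a) (fun t => t ^ b * (1 - s - t) ^ c)]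
    show s ^ a * iteratedDeriv l (fun t => t ^ b * (1 - s - t) ^ c) y = _
    rw [iteratedDeriv_congr_open isOpen_Ioo (fun t _ => congrFun hfun t) l y hy']
    rw [key (1 - s) (Finset.range 1) (fun _ => (1:ℝ)) (fun _ => b) (fun _ => c) l y hy']
    rw [Finset.sum_range_one, one_mul, Finset.mul_sum]
    apply Finset.sum_congr rfl
    intro j _
    have e : 1 - s - y = 1 - y - s := by ring
    rw [e]
    ring
  rw [iteratedDeriv_congr_open isOpen_Ioo hinner k x hU]
  rw [key (1 - y) (Finset.range (l+1))
    (fun j => ((l.choose j : ℝ) * ffall b j * (-1:ℝ)^(l-j) * ffall c (l-j)) * y ^ (b - j))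
    (fun _ => a) (fun j => c - (l-j:ℕ)) k x hU]
  have e : 1 - y - x = 1 - x - y := by ring
  rw [e]

lemma poch_pos_of_pos {x : ℝ} (hx : 0 < x) (m : ℕ) : 0 < poch x m := by
  induction m with
  | zero => simp [poch_zero]
  | succ m ih => rw [poch_succ]; have : (0:ℝ) ≤ m := Nat.cast_nonneg m; nlinarith

/-- The value of the diagonal moment of `U_{k,n}^{α,β,γ}` against the Jacobi
weight on the triangle. -/
theorem stmt5 (α β γ : ℝ) (hα : -1 < α) (hβ : -1 < β) (hγ : -1 < γ)
    (k n : ℕ) (hkn : k ≤ n) :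
    ∫ p in T2, Ukn α β γ k n p.1 p.2 * p.1 ^ k * p.2 ^ (n - k) * Wt α β γ p.1 p.2
      = (-1 : ℝ) ^ n * poch (α + 1) k * poch (β + 1) (n - k) * poch (γ + 1) n *
          (Nat.factorial k : ℝ) * (Nat.factorial (n - k) : ℝ) / poch (α + β + γ + 3) (2 * n) := by
  classical
  set l : ℕ := n - k with hl
  have hlk : l + k = n := by omega
  have hcastl : ((l:ℕ):ℝ) = (n:ℝ) - (k:ℝ) := by rw [hl, Nat.cast_sub hkn]
  set a : ℝ := (k:ℝ) + α with ha
  set b : ℝ := (n:ℝ) - (k:ℝ) + β with hb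
  set c : ℝ := (n:ℝ) + γ with hc
  have hGa : (0:ℝ) < Real.Gamma (α+1) := Real.Gamma_pos_of_pos (by linarith)
  have hGb : (0:ℝ) < Real.Gamma (β+1) := Real.Gamma_pos_of_pos (by linarith)
  have hGc : (0:ℝ) < Real.Gamma (γ+1) := Real.Gamma_pos_of_pos (by linarith)
  have hGs : (0:ℝ) < Real.Gamma (α+β+γ+3) := Real.Gamma_pos_of_pos (by linarith)
  have hn0 : (0:ℝ) ≤ (n:ℝ) := Nat.cast_nonneg n
  have hGd : (0:ℝ) < Real.Gamma (a+b+c+3) := by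
    apply Real.Gamma_pos_of_pos
    rw [ha, hb, hc]; linarith
  have hB3eq : Beta3 (α+1) (β+1) (γ+1)
      = Real.Gamma (α+1) * Real.Gamma (β+1) * Real.Gamma (γ+1) / Real.Gamma (α+β+γ+3) := by
    rw [Beta3]
    have e : α+1+(β+1)+(γ+1) = α+β+γ+3 := by ring
    rw [e]
  have hB3pos : 0 < Beta3 (α+1) (β+1) (γ+1) := by
    rw [hB3eq]
    exact div_pos (mul_pos (mul_pos hGa hGb) hGc) hGs
  -- pointwise identity on the open triangle
  have hpoint : ∀ p : ℝ × ℝ, 0 < p.1 → 0 < p.2 → p.1 + p.2 < 1 →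
      Ukn α β γ k n p.1 p.2 * p.1 ^ k * p.2 ^ l * Wt α β γ p.1 p.2
      = ∑ j ∈ Finset.range (l+1), ∑ i ∈ Finset.range (k+1),
          (((l.choose j : ℝ) * ffall b j * (-1:ℝ)^(l-j) * ffall c (l-j)) *
            ((k.choose i : ℝ) * ffall a i * (-1:ℝ)^(k-i) * ffall (c - (l-j:ℕ)) (k-i))
              / Beta3 (α+1) (β+1) (γ+1)) *
          (p.1 ^ (a - i + k) * p.2 ^ (b - j + l) * (1 - p.1 - p.2) ^ (c - (l-j:ℕ) - (k-i:ℕ))) := by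
    intro p hx hy hxy
    simp only [Ukn, Wt, pderiv2]
    rw [← ha, ← hb, ← hc, ← hl]
    have hfold : (fun s => iteratedDeriv l (fun t => s ^ a * t ^ b * (1 - s - t) ^ c) p.2)
        = (fun s => iteratedDeriv l (fun t => s ^ a * (t ^ b * (1 - s - t) ^ c)) p.2) := by
      funext s; congr 1; funext t; ring
    rw [hfold, pderiv2_eval a b c k l p.1 p.2 hx hy hxy]
    have h1 := Real.rpow_pos_of_pos hx α
    have h2 := Real.rpow_pos_of_pos hy β
    have h3 := Real.rpow_pos_of_pos (by linarith : (0:ℝ) < 1 - p.1 - p.2) γ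
    have hw0 : p.1 ^ α * p.2 ^ β * (1 - p.1 - p.2) ^ γ ≠ 0 := by positivity
    have hE : ∀ S : ℝ, (p.1 ^ α * p.2 ^ β * (1 - p.1 - p.2) ^ γ)⁻¹ * S * p.1 ^ k * p.2 ^ l *
        (p.1 ^ α * p.2 ^ β * (1 - p.1 - p.2) ^ γ / Beta3 (α+1) (β+1) (γ+1))
        = S * (p.1 ^ k * p.2 ^ l / Beta3 (α+1) (β+1) (γ+1)) := by
      intro S
      field_simp
    rw [hE, Finset.sum_mul]
    apply Finset.sum_congr rfl
    intro j hj
    rw [Finset.mul_sum, Finset.sum_mul]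
    apply Finset.sum_congr rfl
    intro i hi
    have ex : p.1 ^ (a - (i:ℝ) + (k:ℝ)) = p.1 ^ (a - (i:ℝ)) * p.1 ^ k := by
      rw [Real.rpow_add hx, Real.rpow_natCast]
    have ey : p.2 ^ (b - (j:ℝ) + (l:ℝ)) = p.2 ^ (b - (j:ℝ)) * p.2 ^ l := by
      rw [Real.rpow_add hy, Real.rpow_natCast]
    rw [ex, ey]
    ring
  -- null boundary sets
  have hN1 : volume {p : ℝ × ℝ | p.1 = 0} = 0 := by
    have e : {p : ℝ × ℝ | p.1 = 0} = ({(0:ℝ)} : Set ℝ) ×ˢ (Set.univ : Set ℝ) := by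
      ext p
      simp only [Set.mem_setOf_eq, Set.mem_prod, Set.mem_singleton_iff, Set.mem_univ, and_true]
    rw [e, MeasureTheory.Measure.volume_eq_prod ℝ ℝ, MeasureTheory.Measure.prod_prod]
    simp
  have hN2 : volume {p : ℝ × ℝ | p.2 = 0} = 0 := by
    have e : {p : ℝ × ℝ | p.2 = 0} = (Set.univ : Set ℝ) ×ˢ ({(0:ℝ)} : Set ℝ) := by
      ext p
      simp only [Set.mem_setOf_eq, Set.mem_prod, Set.mem_singleton_iff, Set.mem_univ, true_and]
    rw [e, MeasureTheory.Measure.volume_eq_prod ℝ ℝ, MeasureTheory.Measure.prod_prod]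
    simp
  have hN3 : volume {p : ℝ × ℝ | p.1 + p.2 = 1} = 0 := by
    have hmeas : MeasurableSet {p : ℝ × ℝ | p.1 + p.2 = 1} := by
      have e : {p : ℝ × ℝ | p.1 + p.2 = 1}
          = (fun p : ℝ × ℝ => p.1 + p.2) ⁻¹' ({1} : Set ℝ) := by
        ext p; simp
      rw [e]
      exact (measurable_fst.add measurable_snd) (measurableSet_singleton 1)
    rw [MeasureTheory.Measure.volume_eq_prod ℝ ℝ]
    rw [MeasureTheory.Measure.measure_prod_null hmeas]
    apply Filter.Eventually.of_forall
    intro x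
    show volume (Prod.mk x ⁻¹' {p : ℝ × ℝ | p.1 + p.2 = 1}) = 0
    have e : (Prod.mk x ⁻¹' {p : ℝ × ℝ | p.1 + p.2 = 1}) = {(1 - x : ℝ)} := by
      ext y
      simp only [Set.mem_preimage, Set.mem_setOf_eq, Set.mem_singleton_iff]
      constructor <;> intro h <;> linarith
    rw [e]
    simp
  have hae1 : ∀ᵐ p : ℝ × ℝ, p ∉ {q : ℝ × ℝ | q.1 = 0} := measure_eq_zero_iff_ae_notMem.mp hN1
  have hae2 : ∀ᵐ p : ℝ × ℝ, p ∉ {q : ℝ × ℝ | q.2 = 0} := measure_eq_zero_iff_ae_notMem.mp hN2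
  have hae3 : ∀ᵐ p : ℝ × ℝ, p ∉ {q : ℝ × ℝ | q.1 + q.2 = 1} := measure_eq_zero_iff_ae_notMem.mp hN3
  have step1 : ∫ p in T2, Ukn α β γ k n p.1 p.2 * p.1 ^ k * p.2 ^ l * Wt α β γ p.1 p.2
      = ∫ p in T2, ∑ j ∈ Finset.range (l+1), ∑ i ∈ Finset.range (k+1),
          (((l.choose j : ℝ) * ffall b j * (-1:ℝ)^(l-j) * ffall c (l-j)) *
            ((k.choose i : ℝ) * ffall a i * (-1:ℝ)^(k-i) * ffall (c - (l-j:ℕ)) (k-i))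
              / Beta3 (α+1) (β+1) (γ+1)) *
          (p.1 ^ (a - i + k) * p.2 ^ (b - j + l) * (1 - p.1 - p.2) ^ (c - (l-j:ℕ) - (k-i:ℕ))) := by
    apply MeasureTheory.setIntegral_congr_ae measurableSet_T2
    filter_upwards [hae1, hae2, hae3] with p hp1 hp2 hp3 hpT
    obtain ⟨h0x, h0y, hxy1⟩ := hpT
    have hx : 0 < p.1 := lt_of_le_of_ne h0x (fun h => hp1 h.symm)
    have hy : 0 < p.2 := lt_of_le_of_ne h0y (fun h => hp2 h.symm)
    have hxy : p.1 + p.2 < 1 := lt_of_le_of_ne hxy1 hp3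
    exact hpoint p hx hy hxy
  rw [step1]
  -- exponent facts used repeatedly
  have hfacts : ∀ j, j ≤ l → ∀ i, i ≤ k →
      (-1 < a - (i:ℝ) + (k:ℝ)) ∧ (-1 < b - (j:ℝ) + (l:ℝ)) ∧
      (-1 < c - ((l-j:ℕ):ℝ) - ((k-i:ℕ):ℝ)) := by
    intro j hjl i hik
    have h1 : ((i:ℝ)) ≤ (k:ℝ) := Nat.cast_le.mpr hik
    have h2 : ((j:ℝ)) ≤ (l:ℝ) := Nat.cast_le.mpr hjl
    have h3 : ((l-j:ℕ):ℝ) + ((k-i:ℕ):ℝ) ≤ (n:ℝ) := by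
      have h4 : (l-j) + (k-i) ≤ n := by omega
      exact_mod_cast h4
    have h5 : (0:ℝ) ≤ ((l-j:ℕ):ℝ) := Nat.cast_nonneg _
    have h6 : (0:ℝ) ≤ ((k-i:ℕ):ℝ) := Nat.cast_nonneg _
    have h7 : (0:ℝ) ≤ ((j:ℝ)) := Nat.cast_nonneg _
    have h8 : (0:ℝ) ≤ ((i:ℝ)) := Nat.cast_nonneg _
    refine ⟨by rw [ha]; linarith, ?_, by rw [hc]; linarith⟩
    rw [hb]
    have : ((l:ℝ)) = (n:ℝ) - (k:ℝ) := hcastl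
    linarith
  -- integrate term by term
  have hint : ∀ j, j ≤ l → ∀ i, i ≤ k →
      MeasureTheory.IntegrableOn (fun p : ℝ × ℝ =>
        (((l.choose j : ℝ) * ffall b j * (-1:ℝ)^(l-j) * ffall c (l-j)) *
            ((k.choose i : ℝ) * ffall a i * (-1:ℝ)^(k-i) * ffall (c - (l-j:ℕ)) (k-i))
              / Beta3 (α+1) (β+1) (γ+1)) *
          (p.1 ^ (a - i + k) * p.2 ^ (b - j + l) * (1 - p.1 - p.2) ^ (c - (l-j:ℕ) - (k-i:ℕ))))
        T2 volume := by
    intro j hjl i hik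
    obtain ⟨e1, e2, e3⟩ := hfacts j hjl i hik
    exact ((dirichlet _ _ _ e1 e2 e3).1).const_mul _
  rw [MeasureTheory.integral_finset_sum]
  swap
  · intro j hj
    apply MeasureTheory.integrable_finset_sum
    intro i hi
    exact hint j (Nat.lt_succ_iff.mp (Finset.mem_range.mp hj)) i
      (Nat.lt_succ_iff.mp (Finset.mem_range.mp hi))
  have step2 : ∀ j ∈ Finset.range (l+1),
      (∫ p in T2, ∑ i ∈ Finset.range (k+1),
          (((l.choose j : ℝ) * ffall b j * (-1:ℝ)^(l-j) * ffall c (l-j)) *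
            ((k.choose i : ℝ) * ffall a i * (-1:ℝ)^(k-i) * ffall (c - (l-j:ℕ)) (k-i))
              / Beta3 (α+1) (β+1) (γ+1)) *
          (p.1 ^ (a - i + k) * p.2 ^ (b - j + l) * (1 - p.1 - p.2) ^ (c - (l-j:ℕ) - (k-i:ℕ))))
      = ∑ i ∈ Finset.range (k+1),
          (((l.choose j : ℝ) * ffall b j * (-1:ℝ)^(l-j) * ffall c (l-j)) *
            ((k.choose i : ℝ) * ffall a i * (-1:ℝ)^(k-i) * ffall (c - (l-j:ℕ)) (k-i))
              / Beta3 (α+1) (β+1) (γ+1)) *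
          Beta3 (a - i + k + 1) (b - j + l + 1) (c - (l-j:ℕ) - (k-i:ℕ) + 1) := by
    intro j hj
    have hjl : j ≤ l := Nat.lt_succ_iff.mp (Finset.mem_range.mp hj)
    rw [MeasureTheory.integral_finset_sum]
    swap
    · intro i hi
      exact hint j hjl i (Nat.lt_succ_iff.mp (Finset.mem_range.mp hi))
    apply Finset.sum_congr rfl
    intro i hi
    have hik : i ≤ k := Nat.lt_succ_iff.mp (Finset.mem_range.mp hi)
    obtain ⟨e1, e2, e3⟩ := hfacts j hjl i hik
    rw [MeasureTheory.integral_const_mul, (dirichlet _ _ _ e1 e2 e3).2]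
  rw [Finset.sum_congr rfl step2]
  -- per-term Gamma reduction
  have hterm : ∀ j ∈ Finset.range (l+1), ∀ i ∈ Finset.range (k+1),
      (((l.choose j : ℝ) * ffall b j * (-1:ℝ)^(l-j) * ffall c (l-j)) *
            ((k.choose i : ℝ) * ffall a i * (-1:ℝ)^(k-i) * ffall (c - (l-j:ℕ)) (k-i))
              / Beta3 (α+1) (β+1) (γ+1)) *
          Beta3 (a - i + k + 1) (b - j + l + 1) (c - (l-j:ℕ) - (k-i:ℕ) + 1)
      = ((Real.Gamma (c+1) / (Beta3 (α+1) (β+1) (γ+1) * Real.Gamma (a+b+c+3))) *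
          ((l.choose j : ℝ) * ffall b j * (-1:ℝ)^(l-j) * Real.Gamma (b - j + l + 1))) *
          ((k.choose i : ℝ) * ffall a i * (-1:ℝ)^(k-i) * Real.Gamma (a - i + k + 1)) := by
    intro j hj i hi
    have hjl : j ≤ l := Nat.lt_succ_iff.mp (Finset.mem_range.mp hj)
    have hik : i ≤ k := Nat.lt_succ_iff.mp (Finset.mem_range.mp hi)
    have hclj : ((l-j:ℕ):ℝ) = (l:ℝ) - (j:ℝ) := Nat.cast_sub hjl
    have hcki : ((k-i:ℕ):ℝ) = (k:ℝ) - (i:ℝ) := Nat.cast_sub hik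
    have hden : (a - (i:ℝ) + (k:ℝ) + 1) + (b - (j:ℝ) + (l:ℝ) + 1)
        + (c - ((l-j:ℕ):ℝ) - ((k-i:ℕ):ℝ) + 1) = a+b+c+3 := by
      rw [hclj, hcki]; ring
    have hmpos : (0:ℝ) < c - (((l-j) + (k-i) : ℕ):ℝ) + 1 := by
      have h3 : (((l-j) + (k-i) : ℕ):ℝ) ≤ (n:ℝ) := by
        have h4 : (l-j) + (k-i) ≤ n := by omega
        exact_mod_cast h4
      rw [hc]; linarith
    have hc3 := Gamma_ffall c ((l-j) + (k-i)) hmpos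
    rw [ffall_add] at hc3
    have ee : c - (((l-j) + (k-i) : ℕ):ℝ) + 1 = c - ((l-j:ℕ):ℝ) - ((k-i:ℕ):ℝ) + 1 := by
      push_cast
      ring
    rw [ee] at hc3
    rw [show Beta3 (a - (i:ℝ) + (k:ℝ) + 1) (b - (j:ℝ) + (l:ℝ) + 1)
        (c - ((l-j:ℕ):ℝ) - ((k-i:ℕ):ℝ) + 1)
      = Real.Gamma (a - (i:ℝ) + (k:ℝ) + 1) * Real.Gamma (b - (j:ℝ) + (l:ℝ) + 1) *
        Real.Gamma (c - ((l-j:ℕ):ℝ) - ((k-i:ℕ):ℝ) + 1) / Real.Gamma (a+b+c+3) from by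
        rw [Beta3, hden]]
    rw [← hc3]
    simp only [div_eq_mul_inv, mul_inv]
    ring
  rw [Finset.sum_congr rfl (fun j hj => Finset.sum_congr rfl (hterm j hj))]
  -- sum over i
  have hsum_i : ∑ i ∈ Finset.range (k+1),
      (k.choose i : ℝ) * ffall a i * (-1:ℝ)^(k-i) * Real.Gamma (a - i + k + 1)
      = (-1:ℝ)^k * (k.factorial : ℝ) * Real.Gamma (a+1) := by
    have hstep : ∀ i ∈ Finset.range (k+1),
        (k.choose i : ℝ) * ffall a i * (-1:ℝ)^(k-i) * Real.Gamma (a - i + k + 1)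
        = ((-1:ℝ)^(k-i) * (k.choose i : ℝ) * poch (a - i + 1) k) * Real.Gamma (a+1) := by
      intro i hi
      have hik : i ≤ k := Nat.lt_succ_iff.mp (Finset.mem_range.mp hi)
      have h1 : ((i:ℝ)) ≤ (k:ℝ) := Nat.cast_le.mpr hik
      have hpos : (0:ℝ) < a - (i:ℝ) + 1 := by rw [ha]; linarith
      have hg1 : Real.Gamma (a - (i:ℝ) + (k:ℝ) + 1)
          = poch (a - (i:ℝ) + 1) k * Real.Gamma (a - (i:ℝ) + 1) := by
        have hgp := Gamma_poch (a - (i:ℝ) + 1) hpos k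
        have e : a - (i:ℝ) + (k:ℝ) + 1 = (a - (i:ℝ) + 1) + (k:ℝ) := by ring
        rw [e]
        exact hgp
      rw [hg1, ← Gamma_ffall a i (by rw [ha]; linarith)]
      ring
    rw [Finset.sum_congr rfl hstep, ← Finset.sum_mul, fdiff k a]
  -- sum over j
  have hsum_j : ∑ j ∈ Finset.range (l+1),
      (l.choose j : ℝ) * ffall b j * (-1:ℝ)^(l-j) * Real.Gamma (b - j + l + 1)
      = (-1:ℝ)^l * (l.factorial : ℝ) * Real.Gamma (b+1) := by
    have hstep : ∀ j ∈ Finset.range (l+1),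
        (l.choose j : ℝ) * ffall b j * (-1:ℝ)^(l-j) * Real.Gamma (b - j + l + 1)
        = ((-1:ℝ)^(l-j) * (l.choose j : ℝ) * poch (b - j + 1) l) * Real.Gamma (b+1) := by
      intro j hj
      have hjl : j ≤ l := Nat.lt_succ_iff.mp (Finset.mem_range.mp hj)
      have h1 : ((j:ℝ)) ≤ (l:ℝ) := Nat.cast_le.mpr hjl
      have hcl : ((l:ℝ)) = (n:ℝ) - (k:ℝ) := hcastl
      have hpos : (0:ℝ) < b - (j:ℝ) + 1 := by rw [hb]; linarith
      have hg1 : Real.Gamma (b - (j:ℝ) + (l:ℝ) + 1)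
          = poch (b - (j:ℝ) + 1) l * Real.Gamma (b - (j:ℝ) + 1) := by
        have hgp := Gamma_poch (b - (j:ℝ) + 1) hpos l
        have e : b - (j:ℝ) + (l:ℝ) + 1 = (b - (j:ℝ) + 1) + (l:ℝ) := by ring
        rw [e]
        exact hgp
      rw [hg1, ← Gamma_ffall b j (by rw [hb]; linarith)]
      ring
    rw [Finset.sum_congr rfl hstep, ← Finset.sum_mul, fdiff l b]
  -- factor the double sum
  have hfactor : ∑ j ∈ Finset.range (l+1), ∑ i ∈ Finset.range (k+1),
      ((Real.Gamma (c+1) / (Beta3 (α+1) (β+1) (γ+1) * Real.Gamma (a+b+c+3))) *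
          ((l.choose j : ℝ) * ffall b j * (-1:ℝ)^(l-j) * Real.Gamma (b - j + l + 1))) *
          ((k.choose i : ℝ) * ffall a i * (-1:ℝ)^(k-i) * Real.Gamma (a - i + k + 1))
      = (Real.Gamma (c+1) / (Beta3 (α+1) (β+1) (γ+1) * Real.Gamma (a+b+c+3))) *
        ((-1:ℝ)^l * (l.factorial : ℝ) * Real.Gamma (b+1)) *
        ((-1:ℝ)^k * (k.factorial : ℝ) * Real.Gamma (a+1)) := by
    have h1 : ∀ j ∈ Finset.range (l+1),
        (∑ i ∈ Finset.range (k+1),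
          ((Real.Gamma (c+1) / (Beta3 (α+1) (β+1) (γ+1) * Real.Gamma (a+b+c+3))) *
            ((l.choose j : ℝ) * ffall b j * (-1:ℝ)^(l-j) * Real.Gamma (b - j + l + 1))) *
            ((k.choose i : ℝ) * ffall a i * (-1:ℝ)^(k-i) * Real.Gamma (a - i + k + 1)))
        = (((Real.Gamma (c+1) / (Beta3 (α+1) (β+1) (γ+1) * Real.Gamma (a+b+c+3))) *
            ((-1:ℝ)^k * (k.factorial : ℝ) * Real.Gamma (a+1)))) *
            ((l.choose j : ℝ) * ffall b j * (-1:ℝ)^(l-j) * Real.Gamma (b - j + l + 1)) := by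
      intro j _
      rw [← Finset.mul_sum, hsum_i]
      ring
    rw [Finset.sum_congr rfl h1, ← Finset.mul_sum, hsum_j]
    ring
  rw [hfactor]
  -- final algebra
  have hpa : Real.Gamma (a+1) = poch (α+1) k * Real.Gamma (α+1) := by
    have hgp := Gamma_poch (α+1) (by linarith) k
    have e : a + 1 = (α+1) + (k:ℝ) := by rw [ha]; ring
    rw [e]
    exact hgp
  have hpb : Real.Gamma (b+1) = poch (β+1) l * Real.Gamma (β+1) := by
    have hgp := Gamma_poch (β+1) (by linarith) l
    have e : b + 1 = (β+1) + (l:ℝ) := by rw [hb, hcastl]; ring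
    rw [e]
    exact hgp
  have hpc : Real.Gamma (c+1) = poch (γ+1) n * Real.Gamma (γ+1) := by
    have hgp := Gamma_poch (γ+1) (by linarith) n
    have e : c + 1 = (γ+1) + (n:ℝ) := by rw [hc]; ring
    rw [e]
    exact hgp
  have hpd : Real.Gamma (a+b+c+3) = poch (α+β+γ+3) (2*n) * Real.Gamma (α+β+γ+3) := by
    have hgp := Gamma_poch (α+β+γ+3) (by linarith) (2*n)
    have e : a + b + c + 3 = (α+β+γ+3) + ((2*n : ℕ):ℝ) := by
      rw [ha, hb, hc]; push_cast; ring
    rw [e]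
    exact hgp
  have hppos : 0 < poch (α+β+γ+3) (2*n) := poch_pos_of_pos (by linarith) _
  have hsign : (-1:ℝ)^l * (-1:ℝ)^k = (-1:ℝ)^n := by
    rw [← pow_add]
    congr 1
  rw [hpa, hpb, hpc, hpd, hB3eq, ← hsign]
  field_simp
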